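/- Let d ≥ 1, α > 0, and 0 < ε < α, and let X ⊆ S^d be a finite (ε/2)-net of S^d. Then for every finite set Y ⊆ S^d, the chromatic number of the exact distance graph D_{Y,0}(α) (distinct points of Y adjacent iff their geodesic distance equals α) is at most the chromatic number of the ε-distance graph D_{X,ε}(α). -/

import Mathlib

open scoped RealInnerProductSpace

/-- Geodesic distance `arccos ⟨x, y⟩` on the unit sphere in `ℝ^n`. -/
noncomputable def gd {n : ℕ} (x y : EuclideanSpace ℝ (Fin n)) : ℝ :=
  Real.arccos (inner ℝ x y : ℝ)

lemma gd_comm {n : ℕ} (x y : EuclideanSpace ℝ (Fin n)) : gd x y = gd y x := by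
  rw [gd, gd, real_inner_comm]

/-- The unit sphere `S^d ⊆ ℝ^{d+1}`. -/
noncomputable def unitSphere (d : ℕ) : Set (EuclideanSpace ℝ (Fin (d + 1))) :=
  Metric.sphere 0 1

/-- `X` is an `r`-net of `S^d`: every point of the sphere is within geodesic
distance `r` of a point of `X`. -/
def IsNet (d : ℕ) (r : ℝ) (X : Set (EuclideanSpace ℝ (Fin (d + 1)))) : Prop :=
  ∀ y ∈ unitSphere d, ∃ x ∈ X, gd x y ≤ r

/-- The ε-distance graph with parameter α on a set `X ⊆ ℝ^n`: distinct points are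
adjacent iff their geodesic distance lies in `[α - ε, α + ε]`. -/
noncomputable def distGraph {n : ℕ} (X : Set (EuclideanSpace ℝ (Fin n))) (α ε : ℝ) :
    SimpleGraph X where
  Adj x y := x ≠ y ∧ α - ε ≤ gd x.1 y.1 ∧ gd x.1 y.1 ≤ α + ε
  symm := by
    constructor
    intro x y h
    exact ⟨h.1.symm, by rw [gd_comm]; exact h.2.1, by rw [gd_comm]; exact h.2.2⟩
  loopless := ⟨fun x h => h.1 rfl⟩

lemma arccos_anti {x y : ℝ} (h : x ≤ y) : Real.arccos y ≤ Real.arccos x := by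
  rw [Real.arccos, Real.arccos]
  have := Real.monotone_arcsin h
  linarith

lemma gd_nonneg {n : ℕ} (x y : EuclideanSpace ℝ (Fin n)) : 0 ≤ gd x y :=
  Real.arccos_nonneg _

lemma gd_self {n : ℕ} {x : EuclideanSpace ℝ (Fin n)} (hx : ‖x‖ = 1) : gd x x = 0 := by
  rw [gd, real_inner_self_eq_norm_sq, hx]
  simpa using Real.arccos_one

lemma inner_abs_le_one {n : ℕ} {x y : EuclideanSpace ℝ (Fin n)} (hx : ‖x‖ = 1)
    (hy : ‖y‖ = 1) : |(inner ℝ x y : ℝ)| ≤ 1 := by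
  have := abs_real_inner_le_norm x y
  rw [hx, hy] at this; simpa using this

lemma cos_gd {n : ℕ} {x y : EuclideanSpace ℝ (Fin n)} (hx : ‖x‖ = 1) (hy : ‖y‖ = 1) :
    Real.cos (gd x y) = (inner ℝ x y : ℝ) := by
  have h := abs_le.mp (inner_abs_le_one hx hy)
  exact Real.cos_arccos h.1 h.2

/-- Spherical triangle inequality for the geodesic distance on unit vectors. -/
lemma gd_triangle {n : ℕ} {x y z : EuclideanSpace ℝ (Fin n)} (hx : ‖x‖ = 1)
    (hy : ‖y‖ = 1) (hz : ‖z‖ = 1) : gd x z ≤ gd x y + gd y z := by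
  have htb := abs_le.mp (inner_abs_le_one hx hy)
  have hsb := abs_le.mp (inner_abs_le_one hy hz)
  have hyy : (inner ℝ y y : ℝ) = 1 := by
    rw [real_inner_self_eq_norm_sq, hy]; norm_num
  have hxx : (inner ℝ x x : ℝ) = 1 := by
    rw [real_inner_self_eq_norm_sq, hx]; norm_num
  have hzz : (inner ℝ z z : ℝ) = 1 := by
    rw [real_inner_self_eq_norm_sq, hz]; norm_num
  have huv : (inner ℝ (x - (inner ℝ x y : ℝ) • y) (z - (inner ℝ y z : ℝ) • y) : ℝ)
      = (inner ℝ x z : ℝ) - (inner ℝ x y : ℝ) * (inner ℝ y z : ℝ) := by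
    simp only [inner_sub_left, inner_sub_right, real_inner_smul_left,
      real_inner_smul_right, hyy, real_inner_comm y x]
    ring
  have hnu : ‖x - (inner ℝ x y : ℝ) • y‖ = Real.sqrt (1 - (inner ℝ x y : ℝ) ^ 2) := by
    have h1 : ‖x - (inner ℝ x y : ℝ) • y‖ ^ 2 = 1 - (inner ℝ x y : ℝ) ^ 2 := by
      rw [← real_inner_self_eq_norm_sq]
      simp only [inner_sub_left, inner_sub_right, real_inner_smul_left,
        real_inner_smul_right, hyy, hxx, real_inner_comm y x]
      ring
    rw [← h1, Real.sqrt_sq (norm_nonneg _)]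
  have hnv : ‖z - (inner ℝ y z : ℝ) • y‖ = Real.sqrt (1 - (inner ℝ y z : ℝ) ^ 2) := by
    have h1 : ‖z - (inner ℝ y z : ℝ) • y‖ ^ 2 = 1 - (inner ℝ y z : ℝ) ^ 2 := by
      rw [← real_inner_self_eq_norm_sq]
      simp only [inner_sub_left, inner_sub_right, real_inner_smul_left,
        real_inner_smul_right, hyy, hzz, real_inner_comm z y]
      ring
    rw [← h1, Real.sqrt_sq (norm_nonneg _)]
  have hkey : (inner ℝ x y : ℝ) * (inner ℝ y z : ℝ)
      - Real.sqrt (1 - (inner ℝ x y : ℝ) ^ 2) * Real.sqrt (1 - (inner ℝ y z : ℝ) ^ 2)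
      ≤ (inner ℝ x z : ℝ) := by
    have h2 := abs_real_inner_le_norm (x - (inner ℝ x y : ℝ) • y) (z - (inner ℝ y z : ℝ) • y)
    rw [huv, hnu, hnv] at h2
    have := (abs_le.mp h2).1
    linarith
  by_cases hsum : gd x y + gd y z ≤ Real.pi
  · have hcos : Real.cos (gd x y + gd y z) ≤ (inner ℝ x z : ℝ) := by
      rw [Real.cos_add, cos_gd hx hy, cos_gd hy hz, gd, gd, Real.sin_arccos,
        Real.sin_arccos]
      exact hkey
    have h3 : gd x z ≤ Real.arccos (Real.cos (gd x y + gd y z)) :=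
      arccos_anti hcos
    rwa [Real.arccos_cos (add_nonneg (gd_nonneg _ _) (gd_nonneg _ _)) hsum] at h3
  · calc gd x z ≤ Real.pi := Real.arccos_le_pi _
      _ ≤ gd x y + gd y z := le_of_not_ge hsum

lemma norm_of_mem_sphere {d : ℕ} {x : EuclideanSpace ℝ (Fin (d + 1))}
    (hx : x ∈ unitSphere d) : ‖x‖ = 1 := by
  simpa [unitSphere] using hx

/-- any finite subgraph of the exact distance graph has chromatic number at most
that of the ε-distance graph on a finite `(ε/2)`-net. -/
theorem stmt_5 (d : ℕ) (hd : 1 ≤ d) (α ε : ℝ) (hα : 0 < α) (hε0 : 0 < ε) (hεα : ε < α)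
    (X : Set (EuclideanSpace ℝ (Fin (d + 1)))) (hXS : X ⊆ unitSphere d)
    (hXfin : X.Finite) (hnet : IsNet d (ε / 2) X)
    (Y : Set (EuclideanSpace ℝ (Fin (d + 1)))) (hYS : Y ⊆ unitSphere d) (hYfin : Y.Finite) :
    (distGraph Y α 0).chromaticNumber ≤ (distGraph X α ε).chromaticNumber := by
  -- choose a nearest net point for every point of the sphere
  have hchoice : ∀ y : Y, ∃ x : X, gd (x : EuclideanSpace ℝ (Fin (d + 1))) y ≤ ε / 2 := by
    rintro ⟨y, hy⟩
    obtain ⟨x, hxX, hxd⟩ := hnet y (hYS hy)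
    exact ⟨⟨x, hxX⟩, hxd⟩
  choose f hf using hchoice
  -- f induces a graph homomorphism
  have hhom : ∀ {a b : Y}, (distGraph Y α 0).Adj a b →
      (distGraph X α ε).Adj (f a) (f b) := by
    rintro ⟨a, ha⟩ ⟨b, hb⟩ ⟨hne, h1, h2⟩
    have hgd : gd a b = α := le_antisymm (by linarith) (by linarith)
    have hna : ‖a‖ = 1 := norm_of_mem_sphere (hYS ha)
    have hnb : ‖b‖ = 1 := norm_of_mem_sphere (hYS hb)
    have hnfa : ‖(f ⟨a, ha⟩ : EuclideanSpace ℝ (Fin (d + 1)))‖ = 1 :=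
      norm_of_mem_sphere (hXS (f ⟨a, ha⟩).2)
    have hnfb : ‖(f ⟨b, hb⟩ : EuclideanSpace ℝ (Fin (d + 1)))‖ = 1 :=
      norm_of_mem_sphere (hXS (f ⟨b, hb⟩).2)
    have hfa := hf ⟨a, ha⟩
    have hfb := hf ⟨b, hb⟩
    -- upper bound
    have hub : gd (f ⟨a, ha⟩ : EuclideanSpace ℝ (Fin (d + 1))) (f ⟨b, hb⟩) ≤ α + ε := by
      calc gd (f ⟨a, ha⟩ : EuclideanSpace ℝ (Fin (d + 1))) (f ⟨b, hb⟩)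
          ≤ gd (f ⟨a, ha⟩ : EuclideanSpace ℝ (Fin (d + 1))) a + gd a (f ⟨b, hb⟩) :=
            gd_triangle hnfa hna hnfb
        _ ≤ gd (f ⟨a, ha⟩ : EuclideanSpace ℝ (Fin (d + 1))) a
            + (gd a b + gd b (f ⟨b, hb⟩)) := by
            have := gd_triangle hna hnb hnfb
            linarith
        _ ≤ ε / 2 + (α + ε / 2) := by
            have h3 : gd b (f ⟨b, hb⟩ : EuclideanSpace ℝ (Fin (d + 1))) ≤ ε / 2 := by
              rw [gd_comm]; exact hfb
            linarith
        _ = α + ε := by ring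
    -- lower bound
    have hlb : α - ε ≤ gd (f ⟨a, ha⟩ : EuclideanSpace ℝ (Fin (d + 1))) (f ⟨b, hb⟩) := by
      have h4 : gd a b ≤ gd a (f ⟨a, ha⟩) + gd (f ⟨a, ha⟩ : EuclideanSpace ℝ (Fin (d + 1))) b :=
        gd_triangle hna hnfa hnb
      have h5 : gd (f ⟨a, ha⟩ : EuclideanSpace ℝ (Fin (d + 1))) b
          ≤ gd (f ⟨a, ha⟩ : EuclideanSpace ℝ (Fin (d + 1))) (f ⟨b, hb⟩)
            + gd (f ⟨b, hb⟩ : EuclideanSpace ℝ (Fin (d + 1))) b :=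
        gd_triangle hnfa hnfb hnb
      have h6 : gd a (f ⟨a, ha⟩ : EuclideanSpace ℝ (Fin (d + 1))) ≤ ε / 2 := by
        rw [gd_comm]; exact hfa
      linarith
    refine ⟨?_, hlb, hub⟩
    intro hEq
    have : α - ε ≤ gd (f ⟨a, ha⟩ : EuclideanSpace ℝ (Fin (d + 1))) (f ⟨b, hb⟩) := hlb
    rw [hEq, gd_self hnfb] at this
    linarith
  let φ : (distGraph Y α 0) →g (distGraph X α ε) := ⟨f, fun h => hhom h⟩
  refine SimpleGraph.chromaticNumber_le_of_forall_imp ?_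
  intro n hc
  obtain ⟨C⟩ := hc
  exact ⟨(C : (distGraph X α ε) →g _).comp φ⟩
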